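/- Under Conditions 1 and 2, the rescaled mean of the energy increment converges: lim_{h → 0} μ(h)/h⁴ = Σ/2, where Σ = ∫ α(x)² e^{−H(x)} dx. -/

import Mathlib

open MeasureTheory Filter

lemma stmt5_k1_skew (t : ℝ) :
    ((-t) - max (-t) 0 * (1 - Real.exp (-(-t)))) * Real.exp (-t)
      = -((t - max t 0 * (1 - Real.exp (-t)))) := by
  have hmul : Real.exp t * Real.exp (-t) = 1 := by
    rw [← Real.exp_add]; simp
  rcases le_total t 0 with h | h
  · rw [max_eq_left (neg_nonneg.mpr h), max_eq_right h, neg_neg]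
    nlinarith [hmul]
  · rw [max_eq_right (neg_nonpos.mpr h), max_eq_left h, neg_neg]
    ring

lemma stmt5_k2_skew (t : ℝ) :
    ((-t)^2 - (max (-t) 0)^2 * (1 + Real.exp (-(-t)))) * Real.exp (-t)
      = -((t^2 - (max t 0)^2 * (1 + Real.exp (-t)))) := by
  have hmul : Real.exp t * Real.exp (-t) = 1 := by
    rw [← Real.exp_add]; simp
  rcases le_total t 0 with h | h
  · rw [max_eq_left (neg_nonneg.mpr h), max_eq_right h, neg_neg]
    nlinarith [hmul]
  · rw [max_eq_right (neg_nonpos.mpr h), max_eq_left h, neg_neg]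
    nlinarith [hmul]

lemma stmt5_f_abs_le (t : ℝ) : |max t 0 * (1 - Real.exp (-t))| ≤ t ^ 2 := by
  rcases le_total t 0 with h | h
  · rw [max_eq_right h]; simpa using sq_nonneg t
  · rw [max_eq_left h]
    have h1 : Real.exp (-t) ≤ 1 := Real.exp_le_one_iff.mpr (by linarith)
    have h2 : 1 - t ≤ Real.exp (-t) := by
      have := Real.add_one_le_exp (-t); linarith
    rw [abs_of_nonneg (by nlinarith)]
    nlinarith

lemma stmt5_g_abs_le (t : ℝ) : |(max t 0)^2 * (1 + Real.exp (-t))| ≤ 2 * t ^ 2 := by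
  rcases le_total t 0 with h | h
  · rw [max_eq_right h]; simpa using sq_nonneg t
  · rw [max_eq_left h]
    have h1 : Real.exp (-t) ≤ 1 := Real.exp_le_one_iff.mpr (by linarith)
    have h3 : (0:ℝ) < Real.exp (-t) := Real.exp_pos _
    rw [abs_of_nonneg (by nlinarith)]
    nlinarith


/-- Proposition `thm:2musig`, mean part.
Under Condition 1 (`Δ(x,h) = h²α(x) + h²ρ(x,h)` with `ρ(x,h) → 0` as `h → 0`)
and Condition 2 (`sup_{0<h≤1} Δ(x,h)²/h⁴ ≤ D(x)` with `∫ D e^{-H} < ∞`),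
the rescaled mean of the energy increment converges:
`lim_{h→0} μ(h)/h⁴ = Σ/2`, where `Σ = ∫ α(x)² e^{-H(x)} dx`. -/
theorem stmt_5 (m : ℕ) (hm : 0 < m)
    (H : ((Fin m → ℝ) × (Fin m → ℝ)) → ℝ) (hHmeas : Measurable H)
    (hHS : ∀ x : (Fin m → ℝ) × (Fin m → ℝ), H (x.1, -x.2) = H x)
    (hHnorm : ∫ x : (Fin m → ℝ) × (Fin m → ℝ), Real.exp (-H x) = 1)
    (ψ : ℝ → ((Fin m → ℝ) × (Fin m → ℝ)) ≃ ((Fin m → ℝ) × (Fin m → ℝ)))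
    (hψmeas : ∀ h ∈ Set.Ioc (0:ℝ) 1, Measurable (ψ h))
    (hψvol : ∀ h ∈ Set.Ioc (0:ℝ) 1, MeasurePreserving (ψ h) volume volume)
    (hψrev : ∀ h ∈ Set.Ioc (0:ℝ) 1, ∀ x : (Fin m → ℝ) × (Fin m → ℝ),
      (((ψ h).symm (x.1, -x.2)).1, -((ψ h).symm (x.1, -x.2)).2) = ψ h x)
    -- Condition 1
    (α : ((Fin m → ℝ) × (Fin m → ℝ)) → ℝ) (ρ : ((Fin m → ℝ) × (Fin m → ℝ)) → ℝ → ℝ)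
    (hcond1 : ∀ x, ∀ h ∈ Set.Ioc (0:ℝ) 1,
      H (ψ h x) - H x = h ^ 2 * α x + h ^ 2 * ρ x h)
    (hρ : ∀ x, Tendsto (ρ x) (nhdsWithin 0 (Set.Ioi 0)) (nhds 0))
    -- Condition 2
    (D : ((Fin m → ℝ) × (Fin m → ℝ)) → ℝ)
    (hcond2 : ∀ x, ∀ h ∈ Set.Ioc (0:ℝ) 1, (H (ψ h x) - H x) ^ 2 / h ^ 4 ≤ D x)
    (hD : Integrable (fun x => D x * Real.exp (-H x))) :
    Tendsto (fun h : ℝ => (∫ x, (H (ψ h x) - H x) * Real.exp (-H x)) / h ^ 4)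
      (nhdsWithin 0 (Set.Ioi 0)) (nhds ((∫ x, (α x) ^ 2 * Real.exp (-H x)) / 2))
 := by
  have hev : Set.Ioc (0:ℝ) 1 ∈ nhdsWithin (0:ℝ) (Set.Ioi 0) :=
    Ioc_mem_nhdsGT_of_mem ⟨le_refl 0, zero_lt_one⟩
  have hexp : Integrable (fun x => Real.exp (-H x)) := by
    by_contra hc
    rw [integral_undef hc] at hHnorm
    exact one_ne_zero hHnorm.symm
  -- the key symmetry identity
  have key : ∀ h ∈ Set.Ioc (0:ℝ) 1, ∀ k : ℝ → ℝ,
      (∀ t, k (-t) * Real.exp (-t) = - k t) →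
      ∫ x, k (H (ψ h x) - H x) * Real.exp (-H x) = 0 := by
    intro h hh k hk
    set T : ((Fin m → ℝ) × (Fin m → ℝ)) → ((Fin m → ℝ) × (Fin m → ℝ)) :=
      fun x => ((ψ h x).1, -(ψ h x).2) with hTdef
    have hTT : ∀ x, T (T x) = x := by
      intro x
      have h1 := hψrev h hh ((ψ h x).1, -(ψ h x).2)
      simp only [neg_neg, Prod.mk.eta, Equiv.symm_apply_apply] at h1
      show ((ψ h (T x)).1, -(ψ h (T x)).2) = x
      rw [← h1]
      simp
    have hTmeas : Measurable T :=
      (measurable_fst.comp (hψmeas h hh)).prodMk (measurable_snd.comp (hψmeas h hh)).neg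
    have hSpres : MeasurePreserving
        (fun x : (Fin m → ℝ) × (Fin m → ℝ) => (x.1, -x.2)) volume volume := by
      have h2 := (MeasurePreserving.id (volume : Measure (Fin m → ℝ))).prod
        (Measure.measurePreserving_neg (volume : Measure (Fin m → ℝ)))
      rw [← MeasureTheory.Measure.volume_eq_prod] at h2
      have heq : (fun x : (Fin m → ℝ) × (Fin m → ℝ) => (x.1, -x.2))
          = Prod.map id (Neg.neg : (Fin m → ℝ) → (Fin m → ℝ)) := by
        funext x; simp [Prod.map]
      rw [heq]; exact h2
    have hTpres : MeasurePreserving T volume volume := hSpres.comp (hψvol h hh)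
    let Te : ((Fin m → ℝ) × (Fin m → ℝ)) ≃ᵐ ((Fin m → ℝ) × (Fin m → ℝ)) :=
      { toFun := T, invFun := T, left_inv := hTT, right_inv := hTT,
        measurable_toFun := hTmeas, measurable_invFun := hTmeas }
    have hint : ∫ x, (fun y => k (H (ψ h y) - H y) * Real.exp (-H y)) (T x)
        = ∫ x, k (H (ψ h x) - H x) * Real.exp (-H x) :=
      hTpres.integral_comp Te.measurableEmbedding
        (fun y => k (H (ψ h y) - H y) * Real.exp (-H y))
    have hHpsiT : ∀ x, H (ψ h (T x)) = H x := by
      intro x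
      calc H (ψ h (T x)) = H ((ψ h (T x)).1, -(ψ h (T x)).2) := (hHS _).symm
        _ = H (T (T x)) := rfl
        _ = H x := by rw [hTT]
    have hHT : ∀ x, H (T x) = H (ψ h x) := fun x => hHS (ψ h x)
    have hptw : ∀ x, k (H (ψ h (T x)) - H (T x)) * Real.exp (-H (T x))
        = -(k (H (ψ h x) - H x) * Real.exp (-H x)) := by
      intro x
      rw [hHpsiT, hHT]
      have e1 : H x - H (ψ h x) = -(H (ψ h x) - H x) := by ring
      rw [e1]
      have e2 : Real.exp (-H (ψ h x))
          = Real.exp (-(H (ψ h x) - H x)) * Real.exp (-H x) := by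
        rw [← Real.exp_add]; ring_nf
      rw [e2, ← mul_assoc, hk]
      ring
    have h3 : ∫ x, (fun y => k (H (ψ h y) - H y) * Real.exp (-H y)) (T x)
        = -∫ x, k (H (ψ h x) - H x) * Real.exp (-H x) := by
      simp only [hptw]
      exact integral_neg _
    linarith [hint, h3]
  -- basic facts
  have hD0 : ∀ x, 0 ≤ D x := fun x =>
    le_trans (div_nonneg (sq_nonneg _) (by norm_num)) (hcond2 x 1 ⟨zero_lt_one, le_refl 1⟩)
  have hΔmeas : ∀ h ∈ Set.Ioc (0:ℝ) 1, Measurable (fun x => H (ψ h x) - H x) :=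
    fun h hh => (hHmeas.comp (hψmeas h hh)).sub hHmeas
  have hΔsq : ∀ h ∈ Set.Ioc (0:ℝ) 1, ∀ x, (H (ψ h x) - H x) ^ 2 ≤ D x := by
    intro h hh x
    have h1 := hcond2 x h hh
    have h4 : 0 < h ^ 4 := pow_pos hh.1 4
    have h41 : h ^ 4 ≤ 1 := pow_le_one₀ hh.1.le hh.2
    have := (div_le_iff₀ h4).mp h1
    nlinarith [hD0 x]
  -- integrability at fixed h
  have hintΔ : ∀ h ∈ Set.Ioc (0:ℝ) 1,
      Integrable (fun x => (H (ψ h x) - H x) * Real.exp (-H x)) := by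
    intro h hh
    refine Integrable.mono' (hD.add hexp)
      (((hΔmeas h hh).mul (hHmeas.neg.exp)).aestronglyMeasurable)
      (ae_of_all _ fun x => ?_)
    have he : 0 < Real.exp (-H x) := Real.exp_pos _
    have h1 : |H (ψ h x) - H x| ≤ D x + 1 := by
      have h2 := hΔsq h hh x
      nlinarith [sq_abs (H (ψ h x) - H x), abs_nonneg (H (ψ h x) - H x)]
    rw [Real.norm_eq_abs, abs_mul, abs_of_pos he]
    simp only [Pi.add_apply]
    calc |H (ψ h x) - H x| * Real.exp (-H x)
        ≤ (D x + 1) * Real.exp (-H x) := mul_le_mul_of_nonneg_right h1 he.le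
      _ = D x * Real.exp (-H x) + Real.exp (-H x) := by ring
  have hintf : ∀ h ∈ Set.Ioc (0:ℝ) 1,
      Integrable (fun x => (max (H (ψ h x) - H x) 0
        * (1 - Real.exp (-(H (ψ h x) - H x)))) * Real.exp (-H x)) := by
    intro h hh
    refine Integrable.mono' hD
      (((((hΔmeas h hh).max measurable_const).mul
          (measurable_const.sub ((hΔmeas h hh).neg.exp))).mul
        (hHmeas.neg.exp)).aestronglyMeasurable)
      (ae_of_all _ fun x => ?_)
    have he : 0 < Real.exp (-H x) := Real.exp_pos _
    have h1 := stmt5_f_abs_le (H (ψ h x) - H x)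
    have h2 := hΔsq h hh x
    rw [Real.norm_eq_abs, abs_mul, abs_of_pos he]
    nlinarith
  have hintg : ∀ h ∈ Set.Ioc (0:ℝ) 1,
      Integrable (fun x => ((max (H (ψ h x) - H x) 0) ^ 2
        * (1 + Real.exp (-(H (ψ h x) - H x)))) * Real.exp (-H x)) := by
    intro h hh
    refine Integrable.mono' (hD.const_mul 2)
      (((((hΔmeas h hh).max measurable_const).pow_const 2).mul
          (measurable_const.add ((hΔmeas h hh).neg.exp))).mul
        (hHmeas.neg.exp)).aestronglyMeasurable
      (ae_of_all _ fun x => ?_)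
    have he : 0 < Real.exp (-H x) := Real.exp_pos _
    have h1 := stmt5_g_abs_le (H (ψ h x) - H x)
    have h2 := hΔsq h hh x
    rw [Real.norm_eq_abs, abs_mul, abs_of_pos he]
    nlinarith
  have hintsq : ∀ h ∈ Set.Ioc (0:ℝ) 1,
      Integrable (fun x => (H (ψ h x) - H x) ^ 2 * Real.exp (-H x)) := by
    intro h hh
    refine Integrable.mono' hD
      ((((hΔmeas h hh).pow_const 2).mul (hHmeas.neg.exp)).aestronglyMeasurable)
      (ae_of_all _ fun x => ?_)
    have he : 0 < Real.exp (-H x) := Real.exp_pos _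
    have h2 := hΔsq h hh x
    rw [Real.norm_eq_abs, abs_mul, abs_of_pos he, abs_of_nonneg (sq_nonneg _)]
    nlinarith
  -- the two consequences of the key identity
  have I1 : ∀ h ∈ Set.Ioc (0:ℝ) 1,
      ∫ x, (H (ψ h x) - H x) * Real.exp (-H x)
        = ∫ x, (max (H (ψ h x) - H x) 0
            * (1 - Real.exp (-(H (ψ h x) - H x)))) * Real.exp (-H x) := by
    intro h hh
    have h0 := key h hh (fun t => t - max t 0 * (1 - Real.exp (-t)))
      (fun t => stmt5_k1_skew t)
    have hre : (fun x => ((H (ψ h x) - H x) - max (H (ψ h x) - H x) 0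
          * (1 - Real.exp (-(H (ψ h x) - H x)))) * Real.exp (-H x))
        = fun x => (H (ψ h x) - H x) * Real.exp (-H x)
            - (max (H (ψ h x) - H x) 0
              * (1 - Real.exp (-(H (ψ h x) - H x)))) * Real.exp (-H x) := by
      funext x; ring
    simp only [hre] at h0
    rw [integral_sub (hintΔ h hh) (hintf h hh)] at h0
    linarith
  have I2 : ∀ h ∈ Set.Ioc (0:ℝ) 1,
      ∫ x, (H (ψ h x) - H x) ^ 2 * Real.exp (-H x)
        = ∫ x, ((max (H (ψ h x) - H x) 0) ^ 2
            * (1 + Real.exp (-(H (ψ h x) - H x)))) * Real.exp (-H x) := by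
    intro h hh
    have h0 := key h hh (fun t => t ^ 2 - (max t 0) ^ 2 * (1 + Real.exp (-t)))
      (fun t => stmt5_k2_skew t)
    have hre : (fun x => ((H (ψ h x) - H x) ^ 2 - (max (H (ψ h x) - H x) 0) ^ 2
          * (1 + Real.exp (-(H (ψ h x) - H x)))) * Real.exp (-H x))
        = fun x => (H (ψ h x) - H x) ^ 2 * Real.exp (-H x)
            - ((max (H (ψ h x) - H x) 0) ^ 2
              * (1 + Real.exp (-(H (ψ h x) - H x)))) * Real.exp (-H x) := by
      funext x; ring
    simp only [hre] at h0
    rw [integral_sub (hintsq h hh) (hintg h hh)] at h0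
    linarith
  -- pointwise analysis
  have hptwise : ∀ x : (Fin m → ℝ) × (Fin m → ℝ),
      Tendsto (fun h => (max (H (ψ h x) - H x) 0
          * (1 - Real.exp (-(H (ψ h x) - H x)))) * Real.exp (-H x) / h ^ 4)
        (nhdsWithin 0 (Set.Ioi 0)) (nhds ((max (α x) 0) ^ 2 * Real.exp (-H x)))
      ∧ Tendsto (fun h => (H (ψ h x) - H x) ^ 2 * Real.exp (-H x) / h ^ 4)
        (nhdsWithin 0 (Set.Ioi 0)) (nhds ((α x) ^ 2 * Real.exp (-H x)))
      ∧ Tendsto (fun h => ((max (H (ψ h x) - H x) 0) ^ 2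
          * (1 + Real.exp (-(H (ψ h x) - H x)))) * Real.exp (-H x) / h ^ 4)
        (nhdsWithin 0 (Set.Ioi 0)) (nhds (2 * ((max (α x) 0) ^ 2 * Real.exp (-H x)))) := by
    intro x
    set l := nhdsWithin (0:ℝ) (Set.Ioi 0) with hldef
    set u : ℝ → ℝ := fun h => α x + ρ x h with hudef
    have hul : Tendsto u l (nhds (α x)) := by
      have := (tendsto_const_nhds : Tendsto (fun _ : ℝ => α x) l (nhds (α x))).add (hρ x)
      simpa using this
    have hΔeq : ∀ᶠ h in l, H (ψ h x) - H x = h ^ 2 * u h :=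
      Filter.eventually_of_mem hev fun h hh => by rw [hcond1 x h hh, hudef]; ring
    have hsqt : Tendsto (fun h : ℝ => h ^ 2) l (nhds 0) := by
      have := (continuous_pow 2).tendsto (0 : ℝ)
      simpa using this.mono_left nhdsWithin_le_nhds
    have hΔ0 : Tendsto (fun h => h ^ 2 * u h) l (nhds 0) := by
      simpa using hsqt.mul hul
    have hmax : Tendsto (fun h => max (u h) 0) l (nhds (max (α x) 0)) :=
      hul.max tendsto_const_nhds
    have hexpΔ : Tendsto (fun h => Real.exp (-(h ^ 2 * u h))) l (nhds 1) := by
      have hneg : Tendsto (fun h => -(h ^ 2 * u h)) l (nhds 0) := by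
        simpa using hΔ0.neg
      have := (Real.continuous_exp.tendsto 0).comp hneg
      simpa [Function.comp_def] using this
    have hA : Tendsto (fun h => (1 - Real.exp (-(h ^ 2 * u h))) / h ^ 2) l (nhds (α x)) := by
      have hsmall : ∀ᶠ h in l, |h ^ 2 * u h| ≤ 1 := by
        have h1 : Tendsto (fun h => |h ^ 2 * u h|) l (nhds 0) := by
          simpa using hΔ0.abs
        exact (h1.eventually_lt_const zero_lt_one).mono fun h hh => hh.le
      have hd : Tendsto (fun h => (1 - Real.exp (-(h ^ 2 * u h))) / h ^ 2 - u h) l (nhds 0) := by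
        have hg : Tendsto (fun h => h ^ 2 * (u h * u h)) l (nhds 0) := by
          simpa using hsqt.mul (hul.mul hul)
        refine squeeze_zero_norm' ?_ hg
        filter_upwards [hsmall, hev] with h h1 hh
        have h0 : h ≠ 0 := ne_of_gt hh.1
        have hE := Real.abs_exp_sub_one_sub_id_le (x := -(h ^ 2 * u h)) (by rwa [abs_neg])
        have heq : (1 - Real.exp (-(h ^ 2 * u h))) / h ^ 2 - u h
            = -((Real.exp (-(h ^ 2 * u h)) - 1 - (-(h ^ 2 * u h))) / h ^ 2) := by
          field_simp
          ring
        rw [heq, norm_neg, norm_div, Real.norm_eq_abs, Real.norm_eq_abs,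
          abs_of_pos (by positivity : (0:ℝ) < h ^ 2)]
        rw [div_le_iff₀ (by positivity : (0:ℝ) < h ^ 2)]
        calc |Real.exp (-(h ^ 2 * u h)) - 1 - (-(h ^ 2 * u h))| ≤ (-(h ^ 2 * u h)) ^ 2 := hE
          _ = h ^ 2 * (u h * u h) * h ^ 2 := by ring
      have := hd.add hul
      simpa using this
    refine ⟨?_, ?_, ?_⟩
    · have hlim0 : Tendsto (fun h => max (u h) 0 * ((1 - Real.exp (-(h ^ 2 * u h))) / h ^ 2)
          * Real.exp (-H x)) l (nhds (max (α x) 0 * α x * Real.exp (-H x))) :=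
        (hmax.mul hA).mul_const _
      have hval : max (α x) 0 * α x * Real.exp (-H x)
          = (max (α x) 0) ^ 2 * Real.exp (-H x) := by
        rcases le_total (α x) 0 with h | h
        · rw [max_eq_right h]; ring
        · rw [max_eq_left h]; ring
      rw [hval] at hlim0
      refine Tendsto.congr' ?_ hlim0
      filter_upwards [hΔeq, hev] with h hΔ hh
      rw [hΔ]
      have hmx : max (h ^ 2 * u h) 0 = h ^ 2 * max (u h) 0 := by
        rw [mul_max_of_nonneg _ _ (by positivity : (0:ℝ) ≤ h ^ 2), mul_zero]
      rw [hmx]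
      have h0 : h ≠ 0 := ne_of_gt hh.1
      field_simp
    · have hlim0 : Tendsto (fun h => u h * u h * Real.exp (-H x)) l
          (nhds (α x * α x * Real.exp (-H x))) := (hul.mul hul).mul_const _
      have hval : α x * α x * Real.exp (-H x) = (α x) ^ 2 * Real.exp (-H x) := by ring
      rw [hval] at hlim0
      refine Tendsto.congr' ?_ hlim0
      filter_upwards [hΔeq, hev] with h hΔ hh
      rw [hΔ]
      have h0 : h ≠ 0 := ne_of_gt hh.1
      field_simp
    · have hlim0 : Tendsto (fun h => max (u h) 0 * max (u h) 0
            * (1 + Real.exp (-(h ^ 2 * u h))) * Real.exp (-H x)) l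
          (nhds (max (α x) 0 * max (α x) 0 * (1 + 1) * Real.exp (-H x))) :=
        (((hmax.mul hmax).mul (tendsto_const_nhds.add hexpΔ)             )).mul_const _
      have hval : max (α x) 0 * max (α x) 0 * (1 + 1) * Real.exp (-H x)
          = 2 * ((max (α x) 0) ^ 2 * Real.exp (-H x)) := by ring
      rw [hval] at hlim0
      refine Tendsto.congr' ?_ hlim0
      filter_upwards [hΔeq, hev] with h hΔ hh
      rw [hΔ]
      have hmx : max (h ^ 2 * u h) 0 = h ^ 2 * max (u h) 0 := by
        rw [mul_max_of_nonneg _ _ (by positivity : (0:ℝ) ≤ h ^ 2), mul_zero]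
      rw [hmx]
      have h0 : h ≠ 0 := ne_of_gt hh.1
      field_simp
  -- dominated convergence, three times
  have hL1 : Tendsto (fun h : ℝ => ∫ x, (max (H (ψ h x) - H x) 0
        * (1 - Real.exp (-(H (ψ h x) - H x)))) * Real.exp (-H x) / h ^ 4)
      (nhdsWithin 0 (Set.Ioi 0))
      (nhds (∫ x, (max (α x) 0) ^ 2 * Real.exp (-H x))) := by
    refine tendsto_integral_filter_of_dominated_convergence
      (fun x => D x * Real.exp (-H x)) ?_ ?_ hD (ae_of_all _ fun x => (hptwise x).1)
    · filter_upwards [hev] with h hh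
      exact ((hintf h hh).div_const _).aestronglyMeasurable
    · filter_upwards [hev] with h hh
      refine ae_of_all _ fun x => ?_
      have he : 0 < Real.exp (-H x) := Real.exp_pos _
      have h4 : 0 < h ^ 4 := pow_pos hh.1 4
      have h1 := stmt5_f_abs_le (H (ψ h x) - H x)
      have h2 := hcond2 x h hh
      rw [Real.norm_eq_abs, abs_div, abs_mul, abs_of_pos he, abs_of_pos h4]
      calc |max (H (ψ h x) - H x) 0 * (1 - Real.exp (-(H (ψ h x) - H x)))|
            * Real.exp (-H x) / h ^ 4
          ≤ (H (ψ h x) - H x) ^ 2 * Real.exp (-H x) / h ^ 4 := by gcongr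
        _ = (H (ψ h x) - H x) ^ 2 / h ^ 4 * Real.exp (-H x) := by ring
        _ ≤ D x * Real.exp (-H x) := mul_le_mul_of_nonneg_right h2 he.le
  have hL2 : Tendsto (fun h : ℝ => ∫ x, (H (ψ h x) - H x) ^ 2 * Real.exp (-H x) / h ^ 4)
      (nhdsWithin 0 (Set.Ioi 0))
      (nhds (∫ x, (α x) ^ 2 * Real.exp (-H x))) := by
    refine tendsto_integral_filter_of_dominated_convergence
      (fun x => D x * Real.exp (-H x)) ?_ ?_ hD (ae_of_all _ fun x => (hptwise x).2.1)
    · filter_upwards [hev] with h hh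
      exact ((hintsq h hh).div_const _).aestronglyMeasurable
    · filter_upwards [hev] with h hh
      refine ae_of_all _ fun x => ?_
      have he : 0 < Real.exp (-H x) := Real.exp_pos _
      have h4 : 0 < h ^ 4 := pow_pos hh.1 4
      have h2 := hcond2 x h hh
      rw [Real.norm_eq_abs, abs_div, abs_mul, abs_of_pos he, abs_of_pos h4,
        abs_of_nonneg (sq_nonneg _)]
      calc (H (ψ h x) - H x) ^ 2 * Real.exp (-H x) / h ^ 4
          = (H (ψ h x) - H x) ^ 2 / h ^ 4 * Real.exp (-H x) := by ring
        _ ≤ D x * Real.exp (-H x) := mul_le_mul_of_nonneg_right h2 he.le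
  have hL3 : Tendsto (fun h : ℝ => ∫ x, ((max (H (ψ h x) - H x) 0) ^ 2
        * (1 + Real.exp (-(H (ψ h x) - H x)))) * Real.exp (-H x) / h ^ 4)
      (nhdsWithin 0 (Set.Ioi 0))
      (nhds (∫ x, 2 * ((max (α x) 0) ^ 2 * Real.exp (-H x)))) := by
    refine tendsto_integral_filter_of_dominated_convergence
      (fun x => 2 * (D x * Real.exp (-H x))) ?_ ?_ (hD.const_mul 2)
      (ae_of_all _ fun x => (hptwise x).2.2)
    · filter_upwards [hev] with h hh
      exact ((hintg h hh).div_const _).aestronglyMeasurable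
    · filter_upwards [hev] with h hh
      refine ae_of_all _ fun x => ?_
      have he : 0 < Real.exp (-H x) := Real.exp_pos _
      have h4 : 0 < h ^ 4 := pow_pos hh.1 4
      have h1 := stmt5_g_abs_le (H (ψ h x) - H x)
      have h2 := hcond2 x h hh
      rw [Real.norm_eq_abs, abs_div, abs_mul, abs_of_pos he, abs_of_pos h4]
      calc |(max (H (ψ h x) - H x) 0) ^ 2 * (1 + Real.exp (-(H (ψ h x) - H x)))|
            * Real.exp (-H x) / h ^ 4
          ≤ 2 * (H (ψ h x) - H x) ^ 2 * Real.exp (-H x) / h ^ 4 := by gcongr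
        _ = 2 * ((H (ψ h x) - H x) ^ 2 / h ^ 4 * Real.exp (-H x)) := by ring
        _ ≤ 2 * (D x * Real.exp (-H x)) := by
            have := mul_le_mul_of_nonneg_right h2 he.le
            linarith
  -- identify the two limits of the variance-type integrals
  have hGeq : (fun h : ℝ => ∫ x, (H (ψ h x) - H x) ^ 2 * Real.exp (-H x) / h ^ 4)
      =ᶠ[nhdsWithin (0:ℝ) (Set.Ioi 0)]
      (fun h : ℝ => ∫ x, ((max (H (ψ h x) - H x) 0) ^ 2
        * (1 + Real.exp (-(H (ψ h x) - H x)))) * Real.exp (-H x) / h ^ 4) := by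
    filter_upwards [hev] with h hh
    rw [integral_div, integral_div, I2 h hh]
  have hSig : (∫ x, (α x) ^ 2 * Real.exp (-H x))
      = 2 * ∫ x, (max (α x) 0) ^ 2 * Real.exp (-H x) := by
    have h1 := tendsto_nhds_unique (hL2.congr' hGeq) hL3
    rw [h1, integral_const_mul]
  -- conclude
  have hfinal : (fun h : ℝ => ∫ x, (max (H (ψ h x) - H x) 0
        * (1 - Real.exp (-(H (ψ h x) - H x)))) * Real.exp (-H x) / h ^ 4)
      =ᶠ[nhdsWithin (0:ℝ) (Set.Ioi 0)]
      (fun h : ℝ => (∫ x, (H (ψ h x) - H x) * Real.exp (-H x)) / h ^ 4) := by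
    filter_upwards [hev] with h hh
    rw [integral_div, I1 h hh]
  have := hL1.congr' hfinal
  rw [show (∫ x, (α x) ^ 2 * Real.exp (-H x)) / 2
      = ∫ x, (max (α x) 0) ^ 2 * Real.exp (-H x) from by rw [hSig]; ring]
  exact this
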